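/- Let R be a Noetherian commutative ring and (M_i)_{i ∈ ι} a family of flat R-modules. Then the product module ∏_{i ∈ ι} M_i is a flat R-module. -/

import Mathlib

open TensorProduct LinearMap Function

section Aux

variable {R : Type*} [CommRing R] {ι : Type*} (M : ι → Type*)
  [∀ i, AddCommGroup (M i)] [∀ i, Module R (M i)]

/-- Naturality of `piRightHom`. -/
lemma piRightHom_naturality {A B : Type*} [AddCommGroup A] [Module R A]
    [AddCommGroup B] [Module R B] (φ : A →ₗ[R] B) :
    (piRightHom R R B M) ∘ₗ (rTensor (∀ i, M i) φ)
      = (LinearMap.pi fun i => rTensor (M i) φ ∘ₗ LinearMap.proj i) ∘ₗ piRightHom R R A M := by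
  ext a p
  simp

/-- Swap a double product. -/
def swapPi (κ : Type*) : (κ → ∀ i, M i) ≃ₗ[R] ∀ i, κ → M i where
  toFun f := fun i k => f k i
  map_add' _ _ := rfl
  map_smul' _ _ := rfl
  invFun f := fun k i => f i k
  left_inv _ := rfl
  right_inv _ := rfl

/-- Tensoring with a finite free module commutes with arbitrary products. -/
noncomputable def phiEquiv (κ : Type*) [Fintype κ] [DecidableEq κ] :
    ((κ → R) ⊗[R] (∀ i, M i)) ≃ₗ[R] ∀ i, (κ → R) ⊗[R] M i :=
  (TensorProduct.comm R _ _) ≪≫ₗ (piScalarRight R R (∀ i, M i) κ) ≪≫ₗ swapPi M κ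
    ≪≫ₗ (LinearEquiv.piCongrRight fun i =>
      (piScalarRight R R (M i) κ).symm ≪≫ₗ TensorProduct.comm R (M i) (κ → R))

lemma phiEquiv_coe (κ : Type*) [Fintype κ] [DecidableEq κ] :
    ⇑(phiEquiv M κ) = ⇑(piRightHom R R (κ → R) M) := by
  suffices h : (phiEquiv M κ).toLinearMap = piRightHom R R (κ → R) M by
    rw [← h]; rfl
  apply TensorProduct.ext'
  intro f p
  funext i
  simp only [LinearEquiv.coe_coe, phiEquiv, LinearEquiv.trans_apply, comm_tmul,
    piScalarRight_apply, piScalarRightHom_tmul, LinearEquiv.piCongrRight_apply,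
    AlgebraTensorModule.curry_apply, curry_apply, coe_restrictScalars, piRightHom_tmul,
    LinearMap.compMultilinearMap_apply]
  show (TensorProduct.comm R (M i) (κ → R))
      ((piScalarRight R R (M i) κ).symm (fun k => f k • p i)) = f ⊗ₜ p i
  rw [← LinearEquiv.eq_symm_apply, LinearEquiv.symm_apply_eq]
  simp

lemma piRightHom_injective_of_presentation {n m : ℕ} {N : Type*} [AddCommGroup N] [Module R N]
    (f : (Fin m → R) →ₗ[R] (Fin n → R)) (g : (Fin n → R) →ₗ[R] N)
    (hg : Surjective g) (hfg : Exact f g) :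
    Injective (piRightHom R R N M) := by
  rw [injective_iff_map_eq_zero]
  intro z hz
  obtain ⟨w, rfl⟩ := rTensor_surjective (∀ i, M i) hg z
  have hnatg := LinearMap.congr_fun (piRightHom_naturality M (A := Fin n → R) g) w
  simp only [LinearMap.comp_apply] at hnatg
  rw [hz] at hnatg
  have h0 : ∀ i, rTensor (M i) g (piRightHom R R (Fin n → R) M w i) = 0 := by
    intro i
    exact (congrFun hnatg.symm i)
  have hker : ∀ i, ∃ v, rTensor (M i) f v = piRightHom R R (Fin n → R) M w i := fun i =>
    (rTensor_exact (M i) hfg hg _).mp (h0 i)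
  choose v hv using hker
  have hsurj : Surjective ⇑(piRightHom R R (Fin m → R) M) := by
    rw [← phiEquiv_coe]; exact (phiEquiv M (Fin m)).surjective
  obtain ⟨u, hu⟩ := hsurj v
  have hinj : Injective ⇑(piRightHom R R (Fin n → R) M) := by
    rw [← phiEquiv_coe]; exact (phiEquiv M (Fin n)).injective
  have heq : piRightHom R R (Fin n → R) M (rTensor (∀ i, M i) f u)
      = piRightHom R R (Fin n → R) M w := by
    have hnf := LinearMap.congr_fun (piRightHom_naturality M (A := Fin m → R) f) u
    simp only [LinearMap.comp_apply] at hnf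
    rw [hnf]
    funext i
    simp only [LinearMap.pi_apply, LinearMap.comp_apply, LinearMap.proj_apply, hu]
    exact hv i
  have hwf : rTensor (∀ i, M i) f u = w := hinj heq
  rw [← hwf, ← LinearMap.comp_apply, ← rTensor_comp]
  have hgf : g ∘ₗ f = 0 := by
    ext x
    exact hfg.apply_apply_eq_zero _
  rw [hgf]
  simp

end Aux

/-- Over a Noetherian ring, an arbitrary product of flat modules is flat. -/
theorem stmt5 {R ι : Type*} [CommRing R] [IsNoetherianRing R]
    (M : ι → Type*) [∀ i, AddCommGroup (M i)] [∀ i, Module R (M i)]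
    [∀ i, Module.Flat R (M i)] : Module.Flat R (∀ i, M i) := by
  rw [Module.Flat.iff_rTensor_injective']
  intro I
  -- Build a finite presentation of `I` using Noetherianity.
  obtain ⟨n, vI, hvI⟩ := Submodule.fg_iff_exists_fin_generating_family.mp
    (IsNoetherian.noetherian I)
  have hmem : ∀ k, vI k ∈ I := fun k => hvI ▸ Submodule.subset_span (Set.mem_range_self k)
  set g : (Fin n → R) →ₗ[R] I := Fintype.linearCombination R (fun k => (⟨vI k, hmem k⟩ : I))
  have hg : Surjective g := by
    rintro ⟨x, hx⟩
    rw [← hvI] at hx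
    obtain ⟨c, hc⟩ := Submodule.mem_span_range_iff_exists_fun R |>.mp hx
    refine ⟨c, ?_⟩
    apply Subtype.ext
    have : ((g c : I) : R) = ∑ k, c k • vI k := by
      simp [g, Fintype.linearCombination_apply]
    rw [this, hc]
  obtain ⟨m, w, hw⟩ := Submodule.fg_iff_exists_fin_generating_family.mp
    (IsNoetherian.noetherian (LinearMap.ker g))
  set f : (Fin m → R) →ₗ[R] (Fin n → R) := Fintype.linearCombination R w
  have hfg : Exact f g := by
    rw [LinearMap.exact_iff, ← hw, Fintype.range_linearCombination]
  -- Now prove injectivity of `rTensor (∀ i, M i) I.subtype`.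
  rw [injective_iff_map_eq_zero]
  intro z hz
  have hnat := LinearMap.congr_fun (piRightHom_naturality M (A := I) I.subtype) z
  simp only [LinearMap.comp_apply] at hnat
  rw [hz] at hnat
  have hcomp : ∀ i, rTensor (M i) I.subtype (piRightHom R R I M z i) = 0 := fun i =>
    (congrFun hnat.symm i)
  have hflat : ∀ i, Injective (rTensor (M i) I.subtype) := fun i =>
    (Module.Flat.iff_rTensor_injective' (R := R) (M := M i)).mp inferInstance I
  have hzero : piRightHom R R I M z = 0 := by
    funext i
    exact hflat i (by simpa using hcomp i)
  exact piRightHom_injective_of_presentation M f g hg hfg (by simpa using hzero)
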